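/- For every infinite finitely generated group G there exist two sequences (g_n)_{n∈ℕ} and (h_n)_{n∈ℕ} of elements of G, each recursive with oracle WP(G) (i.e. there is a Turing machine with oracle WP(G) that on input n outputs a word over S representing g_n, respectively h_n), such that the family of sets {1_G} together with all g_n·B_n and all h_n·B_n (n ∈ ℕ) is pairwise disjoint, where B_n is the ball of radius n around 1_G in the word metric. -/

import Mathlib

open scoped Classical

noncomputable section

namespace SDG

/-! ### Relativized computability -/

/-- Partial recursive functions `ℕ →. ℕ` relative to an oracle `O`. -/
inductive NatPartrecIn (O : ℕ →. ℕ) : (ℕ →. ℕ) → Prop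
  | oracle : NatPartrecIn O O
  | zero : NatPartrecIn O (pure 0)
  | succ : NatPartrecIn O Nat.succ
  | left : NatPartrecIn O ↑fun n : ℕ => n.unpair.1
  | right : NatPartrecIn O ↑fun n : ℕ => n.unpair.2
  | pair {f g} : NatPartrecIn O f → NatPartrecIn O g →
      NatPartrecIn O fun n => Nat.pair <$> f n <*> g n
  | comp {f g} : NatPartrecIn O f → NatPartrecIn O g →
      NatPartrecIn O fun n => g n >>= f
  | prec {f g} : NatPartrecIn O f → NatPartrecIn O g →
      NatPartrecIn O (Nat.unpaired fun a n =>
        n.rec (f a) fun y IH => do let i ← IH; g (Nat.pair a (Nat.pair y i)))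
  | rfind {f} : NatPartrecIn O f →
      NatPartrecIn O fun a => Nat.rfind fun n => (fun m => m = 0) <$> f (Nat.pair a n)

/-- A partial function between `Primcodable` types is partial recursive in the oracle `O`. -/
def PartrecIn (O : ℕ →. ℕ) {α σ : Type} [Primcodable α] [Primcodable σ] (f : α →. σ) : Prop :=
  NatPartrecIn O fun n =>
    Part.bind (Part.ofOption (Encodable.decode (α := α) n)) fun a => (f a).map Encodable.encode

/-- A predicate is recursively enumerable in the oracle `O` if it is the domain of a partial
function recursive in `O`. -/
def RePredIn (O : ℕ →. ℕ) {α : Type} [Primcodable α] (p : α → Prop) : Prop :=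
  PartrecIn O fun a => Part.assert (p a) fun _ => Part.some ()

/-- The characteristic function (as an oracle `ℕ →. ℕ`) of a set `L` of elements of a
`Primcodable` type: on the code of an element of `L` it answers `1`, elsewhere `0`. -/
def charFun {α : Type} [Primcodable α] (L : Set α) : ℕ →. ℕ :=
  fun n => Part.some (if ∃ a ∈ L, Encodable.encode a = n then 1 else 0)

/-! ### Finitely generated groups, words and pattern codings -/

variable {G : Type} [Group G]

/-- The group element represented by a word over the generators `S`. -/
def wordEval {k : ℕ} (S : Fin k → G) (w : List (Fin k)) : G :=
  (w.map S).prod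

/-- `S : Fin k → G` is a finite symmetric generating family containing the identity. -/
def IsGenData {k : ℕ} (S : Fin k → G) : Prop :=
  (∃ i, S i = 1) ∧ (∀ i, ∃ j, S j = (S i)⁻¹) ∧ Subgroup.closure (Set.range S) = ⊤

/-- The word problem of `G` with respect to the generating family `S`. -/
def WP {k : ℕ} (S : Fin k → G) : Set (List (Fin k)) :=
  {w | wordEval S w = 1}

/-- A pattern coding over the alphabet `A`: a finite list of pairs (word, symbol). -/
abbrev PatternCoding (k : ℕ) (A : Type) : Type :=
  List (List (Fin k) × A)

/-- The subshift defined by a set `C` of pattern codings: configurations in which no translate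
of a coded pattern occurs. -/
def XC {k : ℕ} (S : Fin k → G) {A : Type} (C : Set (PatternCoding k A)) : Set (G → A) :=
  {x | ¬ ∃ (g : G) (c : PatternCoding k A), c ∈ C ∧ ∀ p ∈ c, x (g * wordEval S p.1) = p.2}

/-- A set is effectively closed if it is defined by a recursively enumerable set of
pattern codings. -/
def EffectivelyClosed {k : ℕ} (S : Fin k → G) {A : Type} [Primcodable A]
    (X : Set (G → A)) : Prop :=
  ∃ C : Set (PatternCoding k A), REPred (· ∈ C) ∧ X = XC S C

/-- A set is `G`-effectively closed if it is defined by a set of pattern codings which is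
recursively enumerable with oracle the word problem of `G`. -/
def GEffectivelyClosed {k : ℕ} (S : Fin k → G) {A : Type} [Primcodable A]
    (X : Set (G → A)) : Prop :=
  ∃ C : Set (PatternCoding k A), RePredIn (charFun (WP S)) (· ∈ C) ∧ X = XC S C

/-- A pattern coding is consistent if words representing the same group element receive the
same symbol. -/
def Consistent {k : ℕ} (S : Fin k → G) {A : Type} (c : PatternCoding k A) : Prop :=
  ∀ p ∈ c, ∀ q ∈ c, wordEval S p.1 = wordEval S q.1 → p.2 = q.2

/-! ### Subshifts, SFTs, sofic subshifts -/

/-- `X ⊆ A^G` is a subshift: closed (for the product of the discrete topology) and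
shift-invariant. -/
def IsSubshift {A : Type} (X : Set (G → A)) : Prop :=
  (letI : TopologicalSpace A := ⊥; IsClosed X) ∧
    ∀ x ∈ X, ∀ g : G, (fun h => x (g⁻¹ * h)) ∈ X

/-- A pattern with finite support over the alphabet `A`. -/
structure Pattern (G : Type) (A : Type) where
  supp : Finset G
  val : (g : G) → g ∈ supp → A

/-- The pattern `p` occurs in the configuration `x` at position `g`. -/
def PatternOccurs {A : Type} (p : Pattern G A) (x : G → A) (g : G) : Prop :=
  ∀ (h : G) (hh : h ∈ p.supp), x (g * h) = p.val h hh

/-- The subshift defined by a set of forbidden patterns. -/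
def XPat {A : Type} (Fs : Set (Pattern G A)) : Set (G → A) :=
  {x | ¬ ∃ (g : G) (p : Pattern G A), p ∈ Fs ∧ PatternOccurs p x g}

/-- A subshift of finite type: defined by a finite set of forbidden patterns. -/
def IsSFT {A : Type} (X : Set (G → A)) : Prop :=
  ∃ Fs : Set (Pattern G A), Fs.Finite ∧ X = XPat Fs

/-- A witness that `X` is sofic: an SFT `Y` over a finite alphabet `B` together with a factor
code (continuous shift-equivariant surjection) from `Y` onto `X`. -/
structure SoficVia (G : Type) [Group G] {A : Type} (X : Set (G → A)) : Type 1 where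
  B : Type
  finB : Fintype B
  Y : Set (G → B)
  sft : IsSFT Y
  subY : IsSubshift Y
  phi : (G → B) → (G → A)
  cont : letI : TopologicalSpace B := ⊥
         letI : TopologicalSpace A := ⊥
         ContinuousOn phi Y
  equiv : ∀ y ∈ Y, ∀ g : G, phi (fun h => y (g⁻¹ * h)) = fun h => phi y (g⁻¹ * h)
  image : phi '' Y = X

/-- A subshift is sofic if it is the image of an SFT under a factor code. -/
def IsSofic {A : Type} (X : Set (G → A)) : Prop :=
  Nonempty (SoficVia G X)

/-- A factor code from `X` onto `Y`: continuous (discrete product topologies),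
shift-equivariant and surjective. -/
def FactorCode {A B : Type} (X : Set (G → A)) (Y : Set (G → B))
    (φ : (G → A) → (G → B)) : Prop :=
  (letI : TopologicalSpace A := ⊥
   letI : TopologicalSpace B := ⊥
   ContinuousOn φ X) ∧
  (∀ x ∈ X, ∀ g : G, φ (fun h => x (g⁻¹ * h)) = fun h => φ x (g⁻¹ * h)) ∧
  φ '' X = Y

/-- Two subshifts are conjugate if there is a shift-equivariant homeomorphism between them. -/
def Conjugate {A B : Type} (X : Set (G → A)) (Y : Set (G → B)) : Prop :=
  ∃ (φ : (G → A) → (G → B)) (ψ : (G → B) → (G → A)),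
    FactorCode X Y φ ∧ FactorCode Y X ψ ∧
    (∀ x ∈ X, ψ (φ x) = x) ∧ (∀ y ∈ Y, φ (ψ y) = y)

/-- The one-or-less subshift: configurations with at most one occurrence of the symbol `1`
(represented by `true`). -/
def Xle1 (G : Type) : Set (G → Bool) :=
  {x | ∀ g h : G, x g = true → x h = true → g = h}

/-! ### `G`-machines -/

/-- A `G`-machine: finite set of states, finite tape alphabet `A` with a blank symbol, initial
state, accepting states, and a transition function moving with the generators `Fin k`. -/
structure GMachine (k : ℕ) (A : Type) : Type 1 where
  Q : Type
  finQ : Fintype Q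
  blank : A
  q0 : Q
  QF : Set Q
  delta : A × Q → A × Q × Fin k

/-- One step of a `G`-machine in the fixed head model: if `δ(x(1),q) = (a,q',s)` then the new
configuration is `σ_{s⁻¹} x̃` where `x̃` is `x` with the value at `1` replaced by `a`. -/
def GMachine.step {k : ℕ} {A : Type} (M : GMachine k A) (S : Fin k → G) :
    (G → A) × M.Q → (G → A) × M.Q :=
  fun xq =>
    let t := M.delta (xq.1 1, xq.2)
    let xt : G → A := Function.update xq.1 1 t.1
    (fun h => xt (S t.2.2 * h), t.2.1)

/-- The configuration which equals the pattern `p` on its support and `blank` elsewhere. -/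
def Pattern.config {A : Type} (p : Pattern G A) (blank : A) : G → A :=
  fun g => if h : g ∈ p.supp then p.val g h else blank

/-- The `G`-machine `M` accepts the pattern `p` if starting from the configuration `x^p` in the
initial state it eventually reaches an accepting state. -/
def GMachine.Accepts {k : ℕ} {A : Type} (M : GMachine k A) (S : Fin k → G)
    (p : Pattern G A) : Prop :=
  ∃ n : ℕ, ((M.step S)^[n] (p.config M.blank, M.q0)).2 ∈ M.QF

/-- A set of patterns is `G`-recursively enumerable if some `G`-machine accepts exactly its
elements. -/
def GRecEnum {k : ℕ} (S : Fin k → G) {A : Type} (L : Set (Pattern G A)) : Prop :=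
  ∃ M : GMachine k A, ∀ p : Pattern G A, M.Accepts S p ↔ p ∈ L

/-- The consistent pattern coding `c` defines the pattern `p`. -/
def Defines {k : ℕ} (S : Fin k → G) {A : Type} (c : PatternCoding k A)
    (p : Pattern G A) : Prop :=
  (∀ g : G, g ∈ p.supp ↔ ∃ q ∈ c, wordEval S q.1 = g) ∧
  ∀ q ∈ c, ∀ hg : wordEval S q.1 ∈ p.supp, p.val (wordEval S q.1) hg = q.2

/-- `p(C)`: the set of patterns defined by the consistent pattern codings of `C`. -/
def patternsOf {k : ℕ} (S : Fin k → G) {A : Type} (C : Set (PatternCoding k A)) :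
    Set (Pattern G A) :=
  {p | ∃ c ∈ C, Consistent S c ∧ Defines S c p}

/-- A set of patterns is closed by extensions if any pattern extending a pattern of the set
also belongs to the set. -/
def ClosedByExtensions {A : Type} (L : Set (Pattern G A)) : Prop :=
  ∀ (p₁ p₂ : Pattern G A) (hsub : p₁.supp ⊆ p₂.supp),
    (∀ (g : G) (hg : g ∈ p₁.supp), p₂.val g (hsub hg) = p₁.val g hg) →
    p₁ ∈ L → p₂ ∈ L

/-! ### Balls, ends, amenability -/

/-- The ball of radius `n` in the word metric given by `S`. -/
def ballS {k : ℕ} (S : Fin k → G) (n : ℕ) : Set G :=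
  {x | ∃ w : List (Fin k), w.length ≤ n ∧ wordEval S w = x}

/-- Adjacency in the Cayley graph restricted to the set `V`. -/
def Adj {k : ℕ} (S : Fin k → G) (V : Set G) (a b : G) : Prop :=
  a ∈ V ∧ b ∈ V ∧ ∃ i, a * S i = b

/-- Reachability inside `V` in the Cayley graph of `(G,S)`. -/
def Reach {k : ℕ} (S : Fin k → G) (V : Set G) (a b : G) : Prop :=
  Relation.ReflTransGen (Adj S V) a b

/-- `G` has at least two ends: for some `n`, the complement of the ball of radius `n` in the
Cayley graph has at least two infinite connected components. -/
def HasTwoOrMoreEnds {k : ℕ} (S : Fin k → G) : Prop :=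
  ∃ (n : ℕ) (x y : G), x ∉ ballS S n ∧ y ∉ ballS S n ∧
    {z | Reach S (ballS S n)ᶜ x z}.Infinite ∧
    {z | Reach S (ballS S n)ᶜ y z}.Infinite ∧
    ¬ Reach S (ballS S n)ᶜ x y

/-- The Følner condition: `G` is amenable. -/
def FolnerAmenable (G : Type) [Group G] : Prop :=
  ∀ (K : Finset G) (ε : ℝ), 0 < ε →
    ∃ F : Finset G, F.Nonempty ∧ ∀ k ∈ K,
      ((F \ F.image (fun x => x * k)).card : ℝ) < ε * F.card

/-! ### `G × ℤ`, presentations, hardness and the domino problems -/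

/-- Generators of `G × ℤ`: the generators of `G` paired with `0`, together with `(1,±1)`. -/
def prodGens {k : ℕ} (S : Fin k → G) : Fin (k + 2) → G × Multiplicative ℤ :=
  fun i =>
    if h : (i : ℕ) < k then (S ⟨i, h⟩, 1)
    else if (i : ℕ) = k then (1, Multiplicative.ofAdd 1)
    else (1, Multiplicative.ofAdd (-1))

/-- The element of the free group over the generator indices represented by a word. -/
def freeWord {k : ℕ} (w : List (Fin k)) : FreeGroup (Fin k) :=
  (w.map FreeGroup.of).prod

/-- `G` is recursively presented with respect to `S`: there is a recursively enumerable set of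
relators (words over the generators) whose normal closure in the free group over the
generator indices is the kernel of the evaluation map. -/
def RecursivelyPresented {k : ℕ} (S : Fin k → G) : Prop :=
  ∃ R : Set (List (Fin k)), REPred (· ∈ R) ∧
    MonoidHom.ker (FreeGroup.lift S) = Subgroup.normalClosure (freeWord '' R)

/-- `L` is hard for the class of predicates recursively enumerable in the oracle `O`
(equivalently, hard for the halting problem of machines with oracle `O`): every
such predicate many-one reduces to `L` via a computable function. -/
def OracleREHard {α : Type} [Primcodable α] (O : ℕ →. ℕ) (L : Set α) : Prop :=
  ∀ p : ℕ → Prop, RePredIn O p → ∃ f : ℕ → α, Computable f ∧ ∀ n, p n ↔ f n ∈ L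

/-- The domino problem of `(K,T)`: pairs `(N, F)` of an alphabet size and a finite list of
pattern codings over `ℕ` such that no configuration with symbols `< N` avoids `F`. -/
def DP {K : Type} [Group K] {m : ℕ} (T : Fin m → K) : Set (ℕ × List (PatternCoding m ℕ)) :=
  {q | ¬ ∃ x : K → ℕ, (∀ g, x g < q.1) ∧ x ∈ XC T {c | c ∈ q.2}}

/-- The origin constrained domino problem of `(K,T)`: triples `((N,a),F)` such that no
configuration with symbols `< N` and the symbol `a` at the origin avoids `F`. -/
def OCDP {K : Type} [Group K] {m : ℕ} (T : Fin m → K) :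
    Set ((ℕ × ℕ) × List (PatternCoding m ℕ)) :=
  {q | ¬ ∃ x : K → ℕ, (∀ g, x g < q.1.1) ∧ x 1 = q.1.2 ∧ x ∈ XC T {c | c ∈ q.2}}

/-! ### Auxiliary development -/

section Aux13

variable {G : Type} [Group G]

theorem wordEval_nil {k : ℕ} (S : Fin k → G) : wordEval S [] = 1 := rfl

theorem wordEval_append {k : ℕ} (S : Fin k → G) (w v : List (Fin k)) :
    wordEval S (w ++ v) = wordEval S w * wordEval S v := by
  simp [wordEval]

/-- A choice of an index for the inverse of each generator. -/
def invIdx {k : ℕ} (S : Fin k → G) : Fin k → Fin k :=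
  fun i => if h : ∃ j, S j = (S i)⁻¹ then h.choose else i

theorem invIdx_spec {k : ℕ} {S : Fin k → G} (hS : ∀ i, ∃ j, S j = (S i)⁻¹) (i : Fin k) :
    S (invIdx S i) = (S i)⁻¹ := by
  unfold invIdx
  rw [dif_pos (hS i)]
  exact (hS i).choose_spec

/-- Formal inverse of a word, via an involution-like index map. -/
def invWordBy {k : ℕ} (ι : Fin k → Fin k) (w : List (Fin k)) : List (Fin k) :=
  (w.reverse).map ι

theorem invWordBy_length {k : ℕ} (ι : Fin k → Fin k) (w : List (Fin k)) :
    (invWordBy ι w).length = w.length := by simp [invWordBy]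

theorem wordEval_invWordBy {k : ℕ} {S : Fin k → G} (hS : ∀ i, ∃ j, S j = (S i)⁻¹)
    (w : List (Fin k)) :
    wordEval S (invWordBy (invIdx S) w) = (wordEval S w)⁻¹ := by
  induction w with
  | nil => simp [invWordBy, wordEval]
  | cons i w ih =>
    have h1 : invWordBy (invIdx S) (i :: w) = invWordBy (invIdx S) w ++ [invIdx S i] := by
      simp [invWordBy]
    rw [h1, wordEval_append, ih]
    have h2 : wordEval S (i :: w) = S i * wordEval S w := by simp [wordEval]
    have h3 : wordEval S [invIdx S i] = (S i)⁻¹ := by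
      simp [wordEval, invIdx_spec hS i]
    rw [h2, h3, mul_inv_rev]

theorem one_mem_ballS {k : ℕ} (S : Fin k → G) (n : ℕ) : (1 : G) ∈ ballS S n :=
  ⟨[], Nat.zero_le _, rfl⟩

theorem ballS_mono {k : ℕ} (S : Fin k → G) {m n : ℕ} (h : m ≤ n) :
    ballS S m ⊆ ballS S n := by
  rintro x ⟨w, hw, rfl⟩
  exact ⟨w, hw.trans h, rfl⟩

theorem mul_mem_ballS {k : ℕ} (S : Fin k → G) {x y : G} {a b : ℕ}
    (hx : x ∈ ballS S a) (hy : y ∈ ballS S b) : x * y ∈ ballS S (a + b) := by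
  obtain ⟨w, hw, rfl⟩ := hx
  obtain ⟨v, hv, rfl⟩ := hy
  exact ⟨w ++ v, by simpa using Nat.add_le_add hw hv, (wordEval_append S w v)⟩

theorem inv_mem_ballS {k : ℕ} {S : Fin k → G} (hS : ∀ i, ∃ j, S j = (S i)⁻¹) {x : G} {n : ℕ}
    (hx : x ∈ ballS S n) : x⁻¹ ∈ ballS S n := by
  obtain ⟨w, hw, rfl⟩ := hx
  exact ⟨invWordBy (invIdx S) w, by simpa [invWordBy_length] using hw, wordEval_invWordBy hS w⟩

theorem ballS_finite {k : ℕ} (S : Fin k → G) (n : ℕ) : (ballS S n).Finite := by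
  have : ballS S n ⊆ wordEval S '' {w : List (Fin k) | w.length ≤ n} := by
    rintro x ⟨w, hw, rfl⟩
    exact ⟨w, hw, rfl⟩
  exact ((List.finite_length_le (Fin k) n).image _).subset this

theorem exists_word {k : ℕ} {S : Fin k → G} (hS : IsGenData S) (g : G) :
    ∃ w : List (Fin k), wordEval S w = g := by
  have hg : g ∈ Subgroup.closure (Set.range S) := hS.2.2 ▸ Subgroup.mem_top g
  induction hg using Subgroup.closure_induction with
  | mem x hx =>
    obtain ⟨i, rfl⟩ := hx
    exact ⟨[i], by simp [wordEval]⟩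
  | one => exact ⟨[], rfl⟩
  | mul x y hx hy ihx ihy =>
    obtain ⟨w, rfl⟩ := ihx
    obtain ⟨v, rfl⟩ := ihy
    exact ⟨w ++ v, wordEval_append S w v⟩
  | inv x hx ih =>
    obtain ⟨w, rfl⟩ := ih
    exact ⟨invWordBy (invIdx S) w, wordEval_invWordBy hS.2.1 w⟩

theorem exists_sphere_word [Infinite G] {k : ℕ} {S : Fin k → G} (hS : IsGenData S) (N : ℕ) :
    ∃ w : List (Fin k), w.length = N + 1 ∧ wordEval S w ∉ ballS S N := by
  by_contra h
  push_neg at h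
  have h' : ballS S (N + 1) ⊆ ballS S N := by
    rintro x ⟨w, hw, rfl⟩
    rcases Nat.lt_or_ge w.length (N + 1) with hlt | hge
    · exact ⟨w, by omega, rfl⟩
    · exact h w (le_antisymm hw hge)
  have hall : ∀ m, ballS S m ⊆ ballS S N := by
    intro m
    induction m with
    | zero => exact ballS_mono S (Nat.zero_le N)
    | succ m ih =>
      rintro x ⟨w, hw, rfl⟩
      rcases List.eq_nil_or_concat w with rfl | ⟨L, b, rfl⟩
      · exact ⟨[], Nat.zero_le _, rfl⟩
      · have hL : wordEval S L ∈ ballS S N := ih ⟨L, by simp at hw ⊢; omega, rfl⟩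
        obtain ⟨v, hv, hev⟩ := hL
        refine h' ⟨v ++ [b], by simp; omega, ?_⟩
        rw [wordEval_append, hev, List.concat_eq_append, wordEval_append]
  have hfin : (Set.univ : Set G).Finite := by
    refine (ballS_finite S N).subset ?_
    intro g _
    obtain ⟨w, rfl⟩ := exists_word hS g
    exact hall w.length ⟨w, le_refl _, rfl⟩
  exact Set.infinite_univ hfin

end Aux13
section Aux13B

open Encodable

/-- All words of exact length `n` over `Fin k`. -/
def WL (k : ℕ) : ℕ → List (List (Fin k))
  | 0 => [[]]
  | n + 1 => (WL k n).flatMap fun w => (List.finRange k).map fun i => i :: w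

theorem mem_WL {k n : ℕ} {w : List (Fin k)} : w ∈ WL k n ↔ w.length = n := by
  induction n generalizing w with
  | zero => simp [WL, List.length_eq_zero_iff]
  | succ n ih =>
    simp only [WL, List.mem_flatMap, List.mem_map]
    constructor
    · rintro ⟨v, hv, i, -, rfl⟩
      simp [ih.1 hv]
    · intro h
      rcases w with _ | ⟨i, v⟩
      · simp at h
      · exact ⟨v, ih.2 (by simpa using h), i, List.mem_finRange i, rfl⟩

/-- All words of length `< n` over `Fin k`. -/
def WLT (k n : ℕ) : List (List (Fin k)) := (List.range n).flatMap (WL k)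

theorem mem_WLT {k n : ℕ} {w : List (Fin k)} : w ∈ WLT k n ↔ w.length < n := by
  simp [WLT, List.mem_flatMap, mem_WL]

/-- The trace of the first `n` values of an oracle, packed with `Nat.pair`. -/
def trace (ov : ℕ → ℕ) : ℕ → ℕ
  | 0 => 0
  | n + 1 => Nat.pair (ov n) (trace ov n)

/-- Reading entry `m` from a trace of length `M`. -/
def readT (M t m : ℕ) : ℕ :=
  ((fun s : ℕ => s.unpair.2)^[M - 1 - m] t).unpair.1

theorem readT_trace (ov : ℕ → ℕ) : ∀ {M m : ℕ}, m < M → readT M (trace ov M) m = ov m := by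
  intro M
  induction M with
  | zero => omega
  | succ M ih =>
    intro m hm
    rcases Nat.lt_or_ge m M with hlt | hge
    · have h1 : M + 1 - 1 - m = (M - 1 - m) + 1 := by omega
      have : readT (M + 1) (trace ov (M + 1)) m = readT M (trace ov M) m := by
        simp only [readT, h1, Function.iterate_succ_apply, trace, Nat.unpair_pair]
      rw [this]
      exact ih hlt
    · have hm' : m = M := by omega
      subst hm'
      simp [readT, trace, Nat.unpair_pair]

/-- Pick the first element of a list satisfying `p`, defaulting to `[]`. -/
def pickFrom {k : ℕ} (p : List (Fin k) → Bool) (l : List (List (Fin k))) : List (Fin k) :=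
  l.foldr (fun w acc => if p w then w else acc) []

theorem pickFrom_spec {k : ℕ} {p : List (Fin k) → Bool} {l : List (List (Fin k))}
    (h : ∃ w ∈ l, p w = true) : pickFrom p l ∈ l ∧ p (pickFrom p l) = true := by
  induction l with
  | nil => simp at h
  | cons a l ih =>
    by_cases ha : p a = true
    · constructor
      · simp [pickFrom, ha]
      · simpa [pickFrom, ha] using ha
    · have h' : ∃ w ∈ l, p w = true := by
        rcases h with ⟨w, hw, hpw⟩
        rcases List.mem_cons.1 hw with rfl | hw'
        · exact absurd hpw ha
        · exact ⟨w, hw', hpw⟩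
      have hres : pickFrom p (a :: l) = pickFrom p l := by
        simp [pickFrom, ha]
      rw [hres]
      exact ⟨List.mem_cons_of_mem _ (ih h').1, (ih h').2⟩

/-- The list of all oracle queries used in the search at radius `N`. -/
def queriesL (k : ℕ) (ι : Fin k → Fin k) (N : ℕ) : List (List (Fin k)) :=
  (WL k N).flatMap fun w => (WLT k N).map fun v => w ++ invWordBy ι v

/-- A strict upper bound on the codes of all queries. -/
def boundQ (k : ℕ) (ι : Fin k → Fin k) (N : ℕ) : ℕ :=
  (queriesL k ι N).foldr (fun u a => max (encode u + 1) a) 0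

theorem lt_foldr_max {k : ℕ} (l : List (List (Fin k))) :
    ∀ u ∈ l, encode u < l.foldr (fun x a => max (encode x + 1) a) 0 := by
  induction l with
  | nil => simp
  | cons a l ih =>
    intro u hu
    rcases List.mem_cons.1 hu with rfl | h'
    · simp [List.foldr_cons]
    · have := ih u h'
      simp only [List.foldr_cons]
      omega

theorem lt_boundQ {k : ℕ} {ι : Fin k → Fin k} {N : ℕ} {u : List (Fin k)}
    (h : u ∈ queriesL k ι N) : encode u < boundQ k ι N :=
  lt_foldr_max _ u h

/-- The search predicate: `w` is "good" if, according to the trace, no shorter word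
evaluates to the same group element. -/
def goodB {k : ℕ} (ι : Fin k → Fin k) (M t N : ℕ) (w : List (Fin k)) : Bool :=
  (WLT k N).foldr (fun v s => (readT M t (encode (w ++ invWordBy ι v)) == 0) && s) true

theorem allB_foldr_iff {k : ℕ} (f : List (Fin k) → ℕ) (l : List (List (Fin k))) :
    l.foldr (fun v s => (f v == 0) && s) true = true ↔ ∀ v ∈ l, f v = 0 := by
  induction l with
  | nil => simp
  | cons a l ih => simp [List.foldr_cons, Bool.and_eq_true, beq_iff_eq, ih]

theorem goodB_iff {k : ℕ} {ι : Fin k → Fin k} {M t N : ℕ} {w : List (Fin k)} :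
    goodB ι M t N w = true ↔
      ∀ v ∈ WLT k N, readT M t (encode (w ++ invWordBy ι v)) = 0 :=
  allB_foldr_iff _ _

/-- The chosen word at index `j` (given trace `t`): the first word of length `(j+1)²`
which, according to the trace, is not equivalent to any shorter word. -/
def pickT (k : ℕ) (ι : Fin k → Fin k) (j t : ℕ) : List (Fin k) :=
  pickFrom (goodB ι (boundQ k ι ((j + 1) * (j + 1))) t ((j + 1) * (j + 1)))
    (WL k ((j + 1) * (j + 1)))

end Aux13B
section Aux13C

open Encodable

variable {G : Type} [Group G]

/-- The value function of the word problem oracle. -/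
def ovWP {k : ℕ} (S : Fin k → G) : ℕ → ℕ :=
  fun m => if ∃ a ∈ WP S, encode a = m then 1 else 0

theorem charFun_WP_eq {k : ℕ} (S : Fin k → G) (m : ℕ) :
    charFun (WP S) m = Part.some (ovWP S m) := rfl

theorem ovWP_encode {k : ℕ} (S : Fin k → G) (u : List (Fin k)) :
    ovWP S (encode u) = if wordEval S u = 1 then 1 else 0 := by
  unfold ovWP
  congr 1
  simp only [eq_iff_iff]
  constructor
  · rintro ⟨a, ha, he⟩
    exact encode_injective he ▸ ha
  · intro h
    exact ⟨u, h, rfl⟩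

/-- The `j`-th chosen word: an element of the sphere of radius `(j+1)²`, computed from the
word problem oracle. -/
def pickW {k : ℕ} (S : Fin k → G) (j : ℕ) : List (Fin k) :=
  pickT k (invIdx S) j (trace (ovWP S) (boundQ k (invIdx S) ((j + 1) * (j + 1))))

theorem pickW_spec [Infinite G] {k : ℕ} {S : Fin k → G} (hS : IsGenData S) (j : ℕ) :
    (pickW S j).length = (j + 1) * (j + 1) ∧
      wordEval S (pickW S j) ∉ ballS S ((j + 1) * (j + 1) - 1) := by
  set N := (j + 1) * (j + 1) with hNdef
  have hN : 1 ≤ N := Nat.one_le_iff_ne_zero.2 (by positivity)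
  set ι := invIdx S with hι
  set M := boundQ k ι N with hM
  set t := trace (ovWP S) M with ht
  have key : ∀ w ∈ WL k N, (goodB ι M t N w = true ↔ wordEval S w ∉ ballS S (N - 1)) := by
    intro w hw
    rw [goodB_iff]
    have hquery : ∀ v ∈ WLT k N,
        readT M t (encode (w ++ invWordBy ι v)) =
          (if wordEval S w * (wordEval S v)⁻¹ = 1 then 1 else 0) := by
      intro v hv
      have hmem : w ++ invWordBy ι v ∈ queriesL k ι N := by
        simp only [queriesL, List.mem_flatMap, List.mem_map]
        exact ⟨w, hw, v, hv, rfl⟩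
      rw [ht, readT_trace _ (lt_boundQ hmem), ovWP_encode, wordEval_append,
        wordEval_invWordBy hS.2.1]
    constructor
    · intro hall hball
      obtain ⟨v, hv, hev⟩ := hball
      have hvmem : v ∈ WLT k N := mem_WLT.2 (by omega)
      have h0 := hall v hvmem
      rw [hquery v hvmem] at h0
      rw [hev] at h0
      simp at h0
    · intro hnot v hv
      rw [hquery v hv]
      split_ifs with h1
      · exfalso
        apply hnot
        have : wordEval S w = wordEval S v := by
          have := mul_inv_eq_one.1 h1
          exact this
        exact ⟨v, by have := mem_WLT.1 hv; omega, this.symm⟩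
      · rfl
  obtain ⟨w0, hlen0, hball0⟩ := exists_sphere_word hS (N - 1)
  have hlen0' : w0.length = N := by omega
  have hball0' : wordEval S w0 ∉ ballS S (N - 1) := by
    intro hmem
    exact hball0 (ballS_mono S (by omega) hmem)
  have hw0 : w0 ∈ WL k N := mem_WL.2 hlen0'
  have hgood0 : goodB ι M t N w0 = true := (key w0 hw0).2 hball0'
  have hp := pickFrom_spec ⟨w0, hw0, hgood0⟩
  exact ⟨mem_WL.1 hp.1, (key _ hp.1).1 hp.2⟩

end Aux13C
section Aux13D

open Encodable

theorem natPartrecIn_of_partrec {O : ℕ →. ℕ} {f : ℕ →. ℕ} (hf : Nat.Partrec f) :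
    NatPartrecIn O f := by
  induction hf with
  | zero => exact .zero
  | succ => exact .succ
  | left => exact .left
  | right => exact .right
  | pair _ _ ihf ihg => exact .pair ihf ihg
  | comp _ _ ihf ihg => exact .comp ihf ihg
  | prec _ _ ihf ihg => exact .prec ihf ihg
  | rfind _ ih => exact .rfind ih

theorem NatPartrecIn.of_eq' {O f g} (hf : NatPartrecIn O f) (H : ∀ n, f n = g n) :
    NatPartrecIn O g := (funext H : f = g) ▸ hf

theorem natPartrecIn_tot {O : ℕ →. ℕ} {h : ℕ → ℕ} (hh : Primrec h) :
    NatPartrecIn O ↑h :=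
  natPartrecIn_of_partrec (Nat.Partrec.of_primrec (Primrec.nat_iff.1 hh))

theorem trace_natPartrecIn {O : ℕ →. ℕ} {ov : ℕ → ℕ} (hov : ∀ n, O n = Part.some (ov n)) :
    NatPartrecIn O (fun n : ℕ => Part.some (trace ov n.unpair.2)) := by
  have h21 : NatPartrecIn O ↑(fun m : ℕ => m.unpair.2.unpair.1) :=
    natPartrecIn_tot ((Primrec.fst.comp Primrec.unpair).comp
      (Primrec.snd.comp Primrec.unpair))
  have h22 : NatPartrecIn O ↑(fun m : ℕ => m.unpair.2.unpair.2) :=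
    natPartrecIn_tot ((Primrec.snd.comp Primrec.unpair).comp
      (Primrec.snd.comp Primrec.unpair))
  have hstep := NatPartrecIn.pair (NatPartrecIn.comp .oracle h21) h22
  have hτ := NatPartrecIn.prec .zero hstep
  refine hτ.of_eq' fun n => ?_
  show Nat.unpaired _ n = _
  unfold Nat.unpaired
  generalize n.unpair.2 = m
  induction m with
  | zero => rfl
  | succ m ih =>
    show (Nat.rec _ _ m : Part ℕ).bind _ = _
    rw [show (Nat.rec _ _ m : Part ℕ) = Part.some (trace ov m) from ih]
    simp only [Part.bind_some]
    show Nat.pair <$> ((↑(fun m : ℕ => m.unpair.2.unpair.1) : ℕ →. ℕ) _ >>= O) <*> _ = _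
    simp only [PFun.coe_val, Part.bind_some, Nat.unpair_pair, Part.map_some]
    simp [Seq.seq, hov m, trace]
    change Part.bind (Part.bind (Part.some m) fun x => O x) (fun y => Part.some (Nat.pair y (trace ov m))) = _
    rw [Part.bind_some, hov m, Part.bind_some]

end Aux13D
section Aux13E
set_option maxHeartbeats 1000000

open Encodable Primrec

theorem primrec_WL (k : ℕ) : Primrec (WL k) := by
  have hcons : Primrec₂ fun (p : (ℕ × List (List (Fin k))) × List (Fin k)) (i : Fin k) =>
      i :: p.2 :=
    Primrec.list_cons.comp₂ Primrec₂.right (Primrec.snd.comp₂ Primrec₂.left)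
  have hstep : Primrec₂ fun (_ : ℕ) (l : List (List (Fin k))) =>
      l.flatMap fun w => (List.finRange k).map fun i => i :: w := by
    have := Primrec.list_flatMap (σ := List (Fin k))
      (f := fun p : ℕ × List (List (Fin k)) => p.2)
      (g := fun p w => (List.finRange k).map fun i => i :: w)
      Primrec.snd (Primrec.list_map (Primrec.const (List.finRange k)) hcons)
    exact this.to₂
  have h := Primrec.nat_rec₁ (f := fun (_ : ℕ) (l : List (List (Fin k))) =>
      l.flatMap fun w => (List.finRange k).map fun i => i :: w) [[]] hstep
  refine h.of_eq fun n => ?_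
  induction n with
  | zero => rfl
  | succ n ih => simp only [WL, ← ih]

theorem primrec_WLT (k : ℕ) : Primrec (WLT k) :=
  Primrec.list_flatMap Primrec.list_range ((primrec_WL k).comp Primrec.snd).to₂

theorem primrec_invWordBy {k : ℕ} (ι : Fin k → Fin k) : Primrec (invWordBy ι) :=
  Primrec.list_map Primrec.list_reverse ((Primrec.dom_finite ι).comp Primrec.snd).to₂

theorem primrec_readT : Primrec fun p : (ℕ × ℕ) × ℕ => readT p.1.1 p.1.2 p.2 := by
  have hrec : Primrec fun p : (ℕ × ℕ) × ℕ =>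
      (Nat.rec (motive := fun _ => ℕ) p.1.2 (fun _ ih => ih.unpair.2)
        (p.1.1 - 1 - p.2) : ℕ) := by
    exact Primrec.nat_rec'
      (f := fun p : (ℕ × ℕ) × ℕ => p.1.1 - 1 - p.2)
      (g := fun p : (ℕ × ℕ) × ℕ => p.1.2)
      (h := fun _ q => q.2.unpair.2)
      (Primrec.nat_sub.comp
        (Primrec.nat_sub.comp (Primrec.fst.comp Primrec.fst) (Primrec.const 1))
        Primrec.snd)
      (Primrec.snd.comp Primrec.fst)
      (((Primrec.snd.comp Primrec.unpair).comp (Primrec.snd.comp Primrec.snd)).to₂)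
  refine (Primrec.fst.comp (Primrec.unpair.comp hrec)).of_eq fun p => ?_
  unfold readT
  congr 1
  generalize p.1.1 - 1 - p.2 = m
  induction m with
  | zero => rfl
  | succ m ih => rw [Function.iterate_succ_apply', ← ih]

theorem primrec_queriesL {k : ℕ} (ι : Fin k → Fin k) : Primrec (queriesL k ι) := by
  have h2 : Primrec₂ fun (p : ℕ × List (Fin k)) (v : List (Fin k)) =>
      p.2 ++ invWordBy ι v :=
    Primrec.list_append.comp₂ (Primrec.snd.comp₂ Primrec₂.left)
      ((primrec_invWordBy ι).comp₂ Primrec₂.right)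
  exact Primrec.list_flatMap (primrec_WL k)
    (Primrec.list_map ((primrec_WLT k).comp Primrec.fst) h2).to₂

theorem primrec_boundQ {k : ℕ} (ι : Fin k → Fin k) : Primrec (boundQ k ι) := by
  have h : Primrec₂ fun (_ : ℕ) (q : List (Fin k) × ℕ) => max (encode q.1 + 1) q.2 :=
    Primrec.nat_max.comp₂
      ((Primrec.succ.comp (Primrec.encode.comp (Primrec.fst.comp Primrec.snd))).to₂)
      ((Primrec.snd.comp Primrec.snd).to₂)
  exact Primrec.list_foldr (primrec_queriesL ι) (Primrec.const 0) h

theorem primrec_goodB' {k : ℕ} (ι : Fin k → Fin k) {α : Type} [Primcodable α]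
    {fM ft fN : α → ℕ} {fw : α → List (Fin k)}
    (hM : Primrec fM) (ht : Primrec ft) (hNp : Primrec fN) (hw : Primrec fw) :
    Primrec fun a => goodB ι (fM a) (ft a) (fN a) (fw a) := by
  have hread' : Primrec fun x : α × (List (Fin k) × Bool) =>
      readT (fM x.1) (ft x.1) (encode (fw x.1 ++ invWordBy ι x.2.1)) :=
    primrec_readT.comp
      (Primrec.pair (Primrec.pair (hM.comp Primrec.fst) (ht.comp Primrec.fst))
        (Primrec.encode.comp (Primrec.list_append.comp (hw.comp Primrec.fst)
          ((primrec_invWordBy ι).comp (Primrec.fst.comp Primrec.snd)))))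
  have hh : Primrec₂ fun (a : α) (q : List (Fin k) × Bool) =>
      ((readT (fM a) (ft a) (encode (fw a ++ invWordBy ι q.1)) == 0) && q.2 : Bool) := by
    have hb : Primrec fun x : α × (List (Fin k) × Bool) =>
        (readT (fM x.1) (ft x.1) (encode (fw x.1 ++ invWordBy ι x.2.1)) == 0 : Bool) :=
      Primrec.beq.comp hread' (Primrec.const 0)
    exact (Primrec.cond hb (Primrec.snd.comp Primrec.snd) (Primrec.const false)).to₂.of_eq
      fun a q => by cases q.2 <;> simp
  have := Primrec.list_foldr
    (f := fun a : α => WLT k (fN a))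
    (g := fun _ => true) (h := fun a q =>
      ((readT (fM a) (ft a) (encode (fw a ++ invWordBy ι q.1)) == 0) && q.2 : Bool))
    ((primrec_WLT k).comp hNp) (Primrec.const true) hh
  exact this.of_eq fun a => rfl

theorem primrec_pickT {k : ℕ} (ι : Fin k → Fin k) :
    Primrec fun p : ℕ × ℕ => pickT k ι p.1 p.2 := by
  have hN : Primrec fun j : ℕ => (j + 1) * (j + 1) :=
    Primrec.nat_mul.comp Primrec.succ Primrec.succ
  have hgood : Primrec fun x : (ℕ × ℕ) × (List (Fin k) × List (Fin k)) =>
      goodB ι (boundQ k ι ((x.1.1 + 1) * (x.1.1 + 1))) x.1.2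
        ((x.1.1 + 1) * (x.1.1 + 1)) x.2.1 :=
    primrec_goodB' ι
      ((primrec_boundQ ι).comp (hN.comp (Primrec.fst.comp Primrec.fst)))
      (Primrec.snd.comp Primrec.fst)
      (hN.comp (Primrec.fst.comp Primrec.fst))
      (Primrec.fst.comp Primrec.snd)
  have hh : Primrec₂ fun (p : ℕ × ℕ) (q : List (Fin k) × List (Fin k)) =>
      (if goodB ι (boundQ k ι ((p.1 + 1) * (p.1 + 1))) p.2
          ((p.1 + 1) * (p.1 + 1)) q.1 = true then q.1 else q.2) := by
    exact (Primrec.cond hgood (Primrec.fst.comp Primrec.snd)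
      (Primrec.snd.comp Primrec.snd)).to₂.of_eq fun p q => by
        cases hgb : goodB ι (boundQ k ι ((p.1 + 1) * (p.1 + 1))) p.2
          ((p.1 + 1) * (p.1 + 1)) q.1 <;> simp [hgb]
  have := Primrec.list_foldr
    (f := fun p : ℕ × ℕ => WL k ((p.1 + 1) * (p.1 + 1)))
    (g := fun _ => ([] : List (Fin k)))
    (h := fun p q => if goodB ι (boundQ k ι ((p.1 + 1) * (p.1 + 1))) p.2
        ((p.1 + 1) * (p.1 + 1)) q.1 = true then q.1 else q.2)
    ((primrec_WL k).comp (hN.comp Primrec.fst)) (Primrec.const []) hh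
  exact this.of_eq fun p => rfl

theorem pick_natPartrecIn {k : ℕ} (ι : Fin k → Fin k) {O : ℕ →. ℕ} {ov : ℕ → ℕ}
    (hov : ∀ n, O n = Part.some (ov n)) :
    NatPartrecIn O (fun j : ℕ =>
      Part.some (encode (pickT k ι j (trace ov (boundQ k ι ((j + 1) * (j + 1))))))) := by
  have hN : Primrec fun j : ℕ => (j + 1) * (j + 1) :=
    Primrec.nat_mul.comp Primrec.succ Primrec.succ
  have hpre : NatPartrecIn O ↑(fun j : ℕ => Nat.pair 0 (boundQ k ι ((j + 1) * (j + 1)))) :=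
    natPartrecIn_tot (Primrec₂.natPair.comp (Primrec.const 0)
      ((primrec_boundQ ι).comp hN))
  have h1 := NatPartrecIn.comp (trace_natPartrecIn hov) hpre
  have h1' : NatPartrecIn O (fun j : ℕ =>
      Part.some (trace ov (boundQ k ι ((j + 1) * (j + 1))))) := by
    refine h1.of_eq' fun j => ?_
    simp [PFun.coe_val, Part.bind_some, Nat.unpair_pair]
  have hid : NatPartrecIn O ↑(fun n : ℕ => n) := natPartrecIn_tot Primrec.id
  have h2 := NatPartrecIn.pair hid h1'
  have h2' : NatPartrecIn O (fun j : ℕ =>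
      Part.some (Nat.pair j (trace ov (boundQ k ι ((j + 1) * (j + 1)))))) := by
    refine h2.of_eq' fun j => ?_
    simp [PFun.coe_val, Seq.seq]
  have hfinal : NatPartrecIn O ↑(fun m : ℕ => encode (pickT k ι m.unpair.1 m.unpair.2)) :=
    natPartrecIn_tot (Primrec.encode.comp ((primrec_pickT ι).comp
      (Primrec.pair (Primrec.fst.comp Primrec.unpair) (Primrec.snd.comp Primrec.unpair))))
  have h3 := NatPartrecIn.comp hfinal h2'
  refine h3.of_eq' fun j => ?_
  refine (Part.bind_some _ _).trans ?_
  simp [PFun.coe_val, Part.bind_some, Nat.unpair_pair]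

end Aux13E
section Aux13F

open Encodable

variable {G : Type} [Group G]

theorem partrecIn_pickW {k : ℕ} (S : Fin k → G) (c d : ℕ) :
    PartrecIn (charFun (WP S)) (fun n => Part.some (pickW S (c * n + d)) : ℕ →. List (Fin k)) := by
  have hmain := pick_natPartrecIn (invIdx S) (O := charFun (WP S)) (ov := ovWP S)
    (fun n => rfl)
  have haff : NatPartrecIn (charFun (WP S)) ↑(fun n : ℕ => c * n + d) :=
    natPartrecIn_tot (Primrec.nat_add.comp
      (Primrec.nat_mul.comp (Primrec.const c) Primrec.id) (Primrec.const d))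
  have h := NatPartrecIn.comp hmain haff
  unfold PartrecIn
  refine h.of_eq' fun n => ?_
  simp [PFun.coe_val, Part.bind_some, pickW]

theorem pickW_mem_ball [Infinite G] {k : ℕ} {S : Fin k → G} (hS : IsGenData S) (j : ℕ) :
    wordEval S (pickW S j) ∈ ballS S ((j + 1) * (j + 1)) :=
  ⟨pickW S j, le_of_eq (pickW_spec hS j).1, rfl⟩

theorem pick_ball_disjoint [Infinite G] {k : ℕ} {S : Fin k → G} (hS : IsGenData S)
    {i j a b : ℕ} (hij : i < j) (ha : 2 * a ≤ i) (hb : 2 * b ≤ j) :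
    Disjoint ((fun x => wordEval S (pickW S i) * x) '' ballS S a)
      ((fun x => wordEval S (pickW S j) * x) '' ballS S b) := by
  rw [Set.disjoint_left]
  rintro z ⟨u, hu, rfl⟩ ⟨v, hv, heq⟩
  have hxj : wordEval S (pickW S j) = wordEval S (pickW S i) * u * v⁻¹ := by
    simp only at heq
    exact eq_mul_inv_of_mul_eq heq
  have hmem : wordEval S (pickW S j) ∈ ballS S ((i + 1) * (i + 1) + a + b) := by
    rw [hxj]
    exact mul_mem_ballS S (mul_mem_ballS S (pickW_mem_ball hS i) hu)
      (inv_mem_ballS hS.2.1 hv)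
  have harith : (i + 1) * (i + 1) + a + b < (j + 1) * (j + 1) := by nlinarith
  exact (pickW_spec hS j).2
    (ballS_mono S (Nat.le_sub_one_of_lt harith) hmem)

theorem pick_ball_one_disjoint [Infinite G] {k : ℕ} {S : Fin k → G} (hS : IsGenData S)
    {j b : ℕ} (hb : 2 * b ≤ j) :
    Disjoint ({1} : Set G) ((fun x => wordEval S (pickW S j) * x) '' ballS S b) := by
  rw [Set.disjoint_left]
  rintro z rfl ⟨v, hv, heq⟩
  have hxj : wordEval S (pickW S j) = v⁻¹ := by
    rw [eq_inv_iff_mul_eq_one]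
    exact heq
  have hmem : wordEval S (pickW S j) ∈ ballS S b := hxj ▸ inv_mem_ballS hS.2.1 hv
  have harith : b < (j + 1) * (j + 1) := by nlinarith
  exact (pickW_spec hS j).2 (ballS_mono S (Nat.le_sub_one_of_lt harith) hmem)

theorem pick_ball_disjoint' [Infinite G] {k : ℕ} {S : Fin k → G} (hS : IsGenData S)
    {i j a b : ℕ} (hij : i ≠ j) (ha : 2 * a ≤ i) (hb : 2 * b ≤ j) :
    Disjoint ((fun x => wordEval S (pickW S i) * x) '' ballS S a)
      ((fun x => wordEval S (pickW S j) * x) '' ballS S b) := by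
  rcases Nat.lt_or_ge i j with h | h
  · exact pick_ball_disjoint hS h ha hb
  · exact (pick_ball_disjoint hS (by omega) hb ha).symm

end Aux13F
/-- In every infinite finitely generated group there are two sequences,
recursive with oracle the word problem, such that the singleton of the identity together with
the translated balls `g_n B_n` and `h_n B_n` form a pairwise disjoint family. -/
theorem recursive_disjoint_ball_sequences
    {G : Type} [Group G] [Infinite G] {k : ℕ} (S : Fin k → G) (hS : IsGenData S) :
    ∃ f g : ℕ → List (Fin k),
      PartrecIn (charFun (WP S)) (fun n => Part.some (f n) : ℕ →. List (Fin k)) ∧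
      PartrecIn (charFun (WP S)) (fun n => Part.some (g n) : ℕ →. List (Fin k)) ∧
      Pairwise (Function.onFun Disjoint (fun i : Option (Bool × ℕ) =>
        match i with
        | none => ({1} : Set G)
        | some (false, n) => (fun x => wordEval S (f n) * x) '' ballS S n
        | some (true, n) => (fun x => wordEval S (g n) * x) '' ballS S n)) := by
  refine ⟨fun n => pickW S (2 * n + 0), fun n => pickW S (2 * n + 1),
    partrecIn_pickW S 2 0, partrecIn_pickW S 2 1, ?_⟩
  intro i j hne
  simp only [Function.onFun]
  rcases i with _ | ⟨b, n⟩ <;> rcases j with _ | ⟨c, m⟩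
  · exact absurd rfl hne
  · cases c
    · exact pick_ball_one_disjoint hS (by omega)
    · exact pick_ball_one_disjoint hS (by omega)
  · cases b
    · exact (pick_ball_one_disjoint hS (by omega)).symm
    · exact (pick_ball_one_disjoint hS (by omega)).symm
  · cases b <;> cases c
    · have hnm : n ≠ m := by simpa using hne
      exact pick_ball_disjoint' hS (by omega) (by omega) (by omega)
    · exact pick_ball_disjoint' hS (by omega) (by omega) (by omega)
    · exact pick_ball_disjoint' hS (by omega) (by omega) (by omega)
    · have hnm : n ≠ m := by simpa using hne
      exact pick_ball_disjoint' hS (by omega) (by omega) (by omega)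

end SDG
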